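/- Every element of K ≀_Γ H can be written as a finite product of pairwise disjoint wreath cycles in K ≀_Γ Sym(Γ). Explicitly, if w = (f,h) and h = h_1⋯h_ℓ is the disjoint cycle decomposition of h, then w = ∏_{i=1}^ℓ (f|_{supp(h_i)}, h_i) · ∏_{γ ∈ fix(h) ∩ terr(w)} (f|_{{γ}}, 1). -/

import Mathlib

set_option linter.unusedSectionVars false

/-- The wreath product `K ≀_Γ Sym(Γ)` (with right-action conventions from the paper):
multiplication `(f,h)(e,g) = (f · e^{h⁻¹}, hg)` where `[γ](f·e^{h⁻¹}) = [γ]f * [γ^h]e`. -/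
structure Wr (K : Type*) (Γ : Type*) where
  base : Γ → K
  top : Equiv.Perm Γ

namespace Wr

variable {K Γ : Type*} [Group K]

theorem ext' {w v : Wr K Γ} (h1 : w.base = v.base) (h2 : w.top = v.top) : w = v := by
  cases w; cases v; cases h1; cases h2; rfl

instance : Group (Wr K Γ) where
  mul w v := ⟨fun γ => w.base γ * v.base (w.top γ), w.top.trans v.top⟩
  one := ⟨fun _ => 1, 1⟩
  inv w := ⟨fun γ => (w.base (w.top⁻¹ γ))⁻¹, w.top⁻¹⟩
  mul_assoc a b c := ext' (funext fun γ => mul_assoc _ _ _) (Equiv.trans_assoc _ _ _)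
  one_mul a := ext' (funext fun γ => one_mul _) (Equiv.refl_trans _)
  mul_one a := ext' (funext fun γ => mul_one _) (Equiv.trans_refl _)
  inv_mul_cancel a := ext' (funext fun γ => inv_mul_cancel _) (Equiv.symm_trans_self _)

/-- The support of a permutation, as a set. -/
def psupp (h : Equiv.Perm Γ) : Set Γ := {γ | h γ ≠ γ}

/-- The territory of a wreath product element. -/
def terr (w : Wr K Γ) : Set Γ := psupp w.top ∪ {γ | w.base γ ≠ 1}

/-- Wreath cycles: either trivial top and a singleton territory, or the top is a
single nontrivial cycle and the territory equals its support. -/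
def IsWreathCycle (w : Wr K Γ) : Prop :=
  (w.top = 1 ∧ ∃ γ₀, terr w = {γ₀}) ∨ (w.top.IsCycle ∧ terr w = psupp w.top)

/-- The yade of `w` at `γ`: the ordered product `∏_{i=0}^{|h|-1} [γ^{h^i}]f`. -/
noncomputable def yade (w : Wr K Γ) (γ : Γ) : K :=
  ((List.range (orderOf w.top)).map fun i => w.base ((w.top ^ i) γ)).prod

end Wr

open Wr

namespace WrAux

variable {K Γ : Type*} [Group K]

lemma mul_base (w v : Wr K Γ) (γ : Γ) : (w * v).base γ = w.base γ * v.base (w.top γ) := rfl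
lemma mul_top (w v : Wr K Γ) (γ : Γ) : (w * v).top γ = v.top (w.top γ) := rfl

lemma not_terr {z : Wr K Γ} {γ : Γ} (h : γ ∉ terr z) : z.base γ = 1 ∧ z.top γ = γ := by
  simp only [terr, psupp, Set.mem_union, Set.mem_setOf_eq, not_or, not_not] at h
  exact ⟨h.2, h.1⟩

lemma prod_fix (l : List (Wr K Γ)) (γ : Γ) (h : ∀ z ∈ l, γ ∉ terr z) :
    l.prod.base γ = 1 ∧ l.prod.top γ = γ := by
  induction l with
  | nil => exact ⟨rfl, rfl⟩
  | cons z t ih =>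
    have hz := not_terr (h z List.mem_cons_self)
    have iht := ih fun v hv => h v (List.mem_cons_of_mem _ hv)
    rw [List.prod_cons, mul_base, mul_top, hz.1, hz.2, iht.1, iht.2, one_mul]
    exact ⟨rfl, rfl⟩

lemma prod_single (l1 l2 : List (Wr K Γ)) (z : Wr K Γ) (γ : Γ)
    (h1 : ∀ v ∈ l1, γ ∉ terr v) (h2 : ∀ v ∈ l2, z.top γ ∉ terr v) :
    ((l1 ++ z :: l2).prod).base γ = z.base γ ∧ ((l1 ++ z :: l2).prod).top γ = z.top γ := by
  induction l1 with
  | nil =>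
    have h2' := prod_fix l2 (z.top γ) h2
    rw [List.nil_append, List.prod_cons]
    exact ⟨by rw [mul_base, h2'.1, mul_one], by rw [mul_top, h2'.2]⟩
  | cons v t ih =>
    have hv := not_terr (h1 v List.mem_cons_self)
    have iht := ih fun u hu => h1 u (List.mem_cons_of_mem _ hu)
    simp only [List.cons_append, List.prod_cons, mul_base, mul_top, hv.1, hv.2, one_mul]
    exact iht

lemma terr_cyc (f : Γ → K) (c : Equiv.Perm Γ) (hf : ∀ γ, c γ = γ → f γ = 1) :
    terr ⟨f, c⟩ = psupp c := by
  ext γ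
  simp only [terr, psupp, Set.mem_union, Set.mem_setOf_eq]
  constructor
  · rintro (h | h)
    · exact h
    · intro hc; exact h (hf γ hc)
  · exact Or.inl

lemma terr_fixpt (f : Γ → K) (γ₀ : Γ) (hf : ∀ γ, γ ≠ γ₀ → f γ = 1) :
    terr ⟨f, (1 : Equiv.Perm Γ)⟩ ⊆ {γ₀} := by
  intro γ hγ
  rcases hγ with h | h
  · exact absurd rfl h
  · by_contra hne
    exact h (hf γ hne)

end WrAux

open scoped Classical in
/-- every element of `K ≀_Γ H` is a product of pairwise disjoint
wreath cycles, given explicitly by the cycle factors of the top component and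
the fixed points inside the territory. -/
theorem wreathCycle_decomposition {K Γ : Type*} [Group K] [Fintype Γ] [DecidableEq Γ]
    (H : Subgroup (Equiv.Perm Γ)) (w : Wr K Γ) (hw : w.top ∈ H) :
    ∀ l : List (Wr K Γ),
      l = (w.top.cycleFactorsFinset.toList.map fun c =>
            Wr.mk (fun γ => if c γ ≠ γ then w.base γ else 1) c)
          ++ ((Finset.univ.filter fun γ => w.top γ = γ ∧ w.base γ ≠ 1).toList.map fun γ₀ =>
            Wr.mk (fun γ => if γ = γ₀ then w.base γ else 1) 1) →
      (∀ z ∈ l, IsWreathCycle z) ∧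
        l.Pairwise (fun z v => Disjoint (terr z) (terr v)) ∧
        l.prod = w := by
  intro l hl
  -- basic facts about cycle factors
  have key : ∀ c ∈ w.top.cycleFactorsFinset, ∀ γ : Γ, c γ ≠ γ → c γ = w.top γ :=
    fun c hc γ h =>
      (Equiv.Perm.mem_cycleFactorsFinset_iff.mp hc).2 γ (Equiv.Perm.mem_support.mpr h)
  have suppsub : ∀ c ∈ w.top.cycleFactorsFinset, ∀ γ : Γ, w.top γ = γ → c γ = γ := by
    intro c hc γ h
    by_contra hne
    exact hne ((key c hc γ hne).trans h)
  have hdisj : ∀ c ∈ w.top.cycleFactorsFinset, ∀ c' ∈ w.top.cycleFactorsFinset, c ≠ c' →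
      ∀ γ : Γ, c γ = γ ∨ c' γ = γ := fun c hc c' hc' hne =>
    (w.top.cycleFactorsFinset_pairwise_disjoint (Finset.mem_coe.mpr hc)
      (Finset.mem_coe.mpr hc') hne)
  -- territories of the factors
  have hterrF : ∀ c : Equiv.Perm Γ,
      terr (Wr.mk (fun γ => if c γ ≠ γ then w.base γ else 1) c) = psupp c :=
    fun c => WrAux.terr_cyc _ c (fun γ h => if_neg (not_not_intro h))
  have hterrG : ∀ γ₀ : Γ,
      terr (Wr.mk (fun γ => if γ = γ₀ then w.base γ else 1) (1 : Equiv.Perm Γ)) ⊆ {γ₀} :=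
    fun γ₀ => WrAux.terr_fixpt _ γ₀ (fun γ h => if_neg h)
  subst hl
  refine ⟨?_, ?_, ?_⟩
  -- 1. every factor is a wreath cycle
  · intro z hz
    rcases List.mem_append.mp hz with hz | hz
    · rcases List.mem_map.mp hz with ⟨c, hc, rfl⟩
      rw [Finset.mem_toList] at hc
      exact Or.inr ⟨(Equiv.Perm.mem_cycleFactorsFinset_iff.mp hc).1, hterrF c⟩
    · rcases List.mem_map.mp hz with ⟨γ₀, hγ₀, rfl⟩
      rw [Finset.mem_toList, Finset.mem_filter] at hγ₀
      refine Or.inl ⟨rfl, γ₀, Set.Subset.antisymm (hterrG γ₀) ?_⟩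
      intro γ hγ
      rw [Set.mem_singleton_iff] at hγ
      subst hγ
      exact Or.inr (by simpa using hγ₀.2.2)
  -- 2. pairwise disjoint territories
  · rw [List.pairwise_append]
    refine ⟨?_, ?_, ?_⟩
    · rw [List.pairwise_map]
      refine List.Pairwise.imp_of_mem ?_ (Finset.nodup_toList _)
      intro c c' hc hc' hne
      rw [Finset.mem_toList] at hc hc'
      rw [hterrF c, hterrF c', Set.disjoint_left]
      intro γ hγ hγ'
      rcases hdisj c hc c' hc' hne γ with h | h
      · exact hγ h
      · exact hγ' h
    · rw [List.pairwise_map]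
      refine List.Pairwise.imp_of_mem ?_ (Finset.nodup_toList _)
      intro γ₀ γ₁ _ _ hne
      refine Set.disjoint_left.mpr fun γ hγ hγ' => ?_
      have h0 := hterrG γ₀ hγ
      have h1 := hterrG γ₁ hγ'
      rw [Set.mem_singleton_iff] at h0 h1
      exact hne (h0 ▸ h1 ▸ rfl)
    · intro a ha b hb
      rcases List.mem_map.mp ha with ⟨c, hc, rfl⟩
      rcases List.mem_map.mp hb with ⟨γ₀, hγ₀, rfl⟩
      rw [Finset.mem_toList] at hc
      rw [Finset.mem_toList, Finset.mem_filter] at hγ₀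
      refine Set.disjoint_left.mpr fun γ hγ hγ' => ?_
      have h1 := hterrG γ₀ hγ'
      rw [Set.mem_singleton_iff] at h1
      subst h1
      rw [hterrF c] at hγ
      exact hγ (suppsub c hc γ hγ₀.2.1)
  -- 3. the product equals w
  · have main : ∀ γ : Γ,
        ((w.top.cycleFactorsFinset.toList.map fun c =>
            Wr.mk (fun γ => if c γ ≠ γ then w.base γ else 1) c)
          ++ ((Finset.univ.filter fun γ => w.top γ = γ ∧ w.base γ ≠ 1).toList.map fun γ₀ =>
            Wr.mk (fun γ => if γ = γ₀ then w.base γ else 1) 1)).prod.base γ = w.base γ ∧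
        ((w.top.cycleFactorsFinset.toList.map fun c =>
            Wr.mk (fun γ => if c γ ≠ γ then w.base γ else 1) c)
          ++ ((Finset.univ.filter fun γ => w.top γ = γ ∧ w.base γ ≠ 1).toList.map fun γ₀ =>
            Wr.mk (fun γ => if γ = γ₀ then w.base γ else 1) 1)).prod.top γ = w.top γ := by
      intro γ
      by_cases hγ : w.top γ = γ
      · by_cases hb : w.base γ = 1
        · -- γ outside every territory
          have hfix := WrAux.prod_fix
            ((w.top.cycleFactorsFinset.toList.map fun c =>
                Wr.mk (fun γ => if c γ ≠ γ then w.base γ else 1) c)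
              ++ ((Finset.univ.filter fun γ => w.top γ = γ ∧ w.base γ ≠ 1).toList.map fun γ₀ =>
                Wr.mk (fun γ => if γ = γ₀ then w.base γ else 1) 1)) γ ?_
          · exact ⟨hfix.1.trans hb.symm, hfix.2.trans hγ.symm⟩
          · intro z hz
            rcases List.mem_append.mp hz with hz | hz
            · rcases List.mem_map.mp hz with ⟨c, hc, rfl⟩
              rw [Finset.mem_toList] at hc
              rw [hterrF c]
              exact not_not_intro (suppsub c hc γ hγ)
            · rcases List.mem_map.mp hz with ⟨γ₀, hγ₀, rfl⟩
              rw [Finset.mem_toList, Finset.mem_filter] at hγ₀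
              intro h
              have := hterrG γ₀ h
              rw [Set.mem_singleton_iff] at this
              subst this
              exact hγ₀.2.2 hb
        · -- γ is a fixed point in the territory
          have hmem : γ ∈ (Finset.univ.filter fun γ => w.top γ = γ ∧ w.base γ ≠ 1) :=
            Finset.mem_filter.mpr ⟨Finset.mem_univ _, hγ, hb⟩
          obtain ⟨s, t, hst⟩ := List.append_of_mem (Finset.mem_toList.mpr hmem)
          have hnd : (s ++ γ :: t).Nodup := hst ▸ Finset.nodup_toList _
          rw [List.nodup_append] at hnd
          have hγs : γ ∉ s := fun h => hnd.2.2 γ h γ List.mem_cons_self rfl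
          have hγt : γ ∉ t := (List.nodup_cons.mp hnd.2.1).1
          rw [hst, List.map_append, List.map_cons, ← List.append_assoc]
          have := WrAux.prod_single
            ((w.top.cycleFactorsFinset.toList.map fun c =>
                Wr.mk (fun γ => if c γ ≠ γ then w.base γ else 1) c)
              ++ s.map fun γ₀ => Wr.mk (fun γ => if γ = γ₀ then w.base γ else 1) 1)
            (t.map fun γ₀ => Wr.mk (fun γ => if γ = γ₀ then w.base γ else 1) 1)
            (Wr.mk (fun γ' => if γ' = γ then w.base γ' else 1) 1) γ ?_ ?_
          · refine ⟨this.1.trans (by simp), this.2.trans ((Equiv.Perm.one_apply γ).trans hγ.symm)⟩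
          · intro v hv
            rcases List.mem_append.mp hv with hv | hv
            · rcases List.mem_map.mp hv with ⟨c, hc, rfl⟩
              rw [Finset.mem_toList] at hc
              rw [hterrF c]
              exact not_not_intro (suppsub c hc γ hγ)
            · rcases List.mem_map.mp hv with ⟨γ₀, hγ₀, rfl⟩
              intro h
              have := hterrG γ₀ h
              rw [Set.mem_singleton_iff] at this
              exact hγs (this ▸ hγ₀)
          · intro v hv
            rcases List.mem_map.mp hv with ⟨γ₀, hγ₀, rfl⟩
            intro h
            have h' := hterrG γ₀ h
            rw [Set.mem_singleton_iff] at h'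
            have : ((Wr.mk (fun γ' => if γ' = γ then w.base γ' else 1)
                (1 : Equiv.Perm Γ)).top γ) = γ := rfl
            rw [this] at h'
            exact hγt (h' ▸ hγ₀)
      · -- γ is moved by w.top
        have hγsupp : γ ∈ w.top.support := Equiv.Perm.mem_support.mpr hγ
        have hc : w.top.cycleOf γ ∈ w.top.cycleFactorsFinset :=
          Equiv.Perm.cycleOf_mem_cycleFactorsFinset_iff.mpr hγsupp
        have hcγ : w.top.cycleOf γ γ = w.top γ := Equiv.Perm.cycleOf_apply_self _ _
        obtain ⟨s, t, hst⟩ := List.append_of_mem (Finset.mem_toList.mpr hc)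
        have hnd : (s ++ w.top.cycleOf γ :: t).Nodup := hst ▸ Finset.nodup_toList _
        rw [List.nodup_append] at hnd
        have hcs : w.top.cycleOf γ ∉ s := fun h => hnd.2.2 _ h _ List.mem_cons_self rfl
        have hct : w.top.cycleOf γ ∉ t := (List.nodup_cons.mp hnd.2.1).1
        have hsmem : ∀ c' ∈ s, c' ∈ w.top.cycleFactorsFinset := fun c' h =>
          Finset.mem_toList.mp (hst ▸ List.mem_append_left _ h)
        have htmem : ∀ c' ∈ t, c' ∈ w.top.cycleFactorsFinset := fun c' h =>
          Finset.mem_toList.mp (hst ▸ List.mem_append_right _ (List.mem_cons_of_mem _ h))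
        rw [hst, List.map_append, List.map_cons, List.append_assoc, List.cons_append]
        have htop : ((Wr.mk (fun γ' => if w.top.cycleOf γ γ' ≠ γ' then w.base γ' else 1)
            (w.top.cycleOf γ)).top γ) = w.top γ := hcγ
        have hwγmoved : w.top (w.top γ) ≠ w.top γ := by
          intro h
          exact hγ (w.top.injective h)
        have := WrAux.prod_single
          (s.map fun c => Wr.mk (fun γ' => if c γ' ≠ γ' then w.base γ' else 1) c)
          ((t.map fun c => Wr.mk (fun γ' => if c γ' ≠ γ' then w.base γ' else 1) c)
            ++ ((Finset.univ.filter fun γ => w.top γ = γ ∧ w.base γ ≠ 1).toList.map fun γ₀ =>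
              Wr.mk (fun γ => if γ = γ₀ then w.base γ else 1) 1))
          (Wr.mk (fun γ' => if w.top.cycleOf γ γ' ≠ γ' then w.base γ' else 1)
            (w.top.cycleOf γ)) γ ?_ ?_
        · refine ⟨this.1.trans ?_, this.2.trans (htop)⟩
          show (if w.top.cycleOf γ γ ≠ γ then w.base γ else 1) = w.base γ
          rw [if_pos (by rw [hcγ]; exact hγ)]
        · intro v hv
          rcases List.mem_map.mp hv with ⟨c', hc', rfl⟩
          have hc'mem := hsmem c' hc'
          have hne : w.top.cycleOf γ ≠ c' := fun h => hcs (h ▸ hc')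
          rw [hterrF c']
          refine not_not_intro ?_
          rcases hdisj _ hc _ hc'mem hne γ with h | h
          · exact absurd (h.symm ▸ hcγ ▸ h) (fun _ => hγ (hcγ ▸ h))
          · exact h
        · intro v hv
          rw [htop]
          rcases List.mem_append.mp hv with hv | hv
          · rcases List.mem_map.mp hv with ⟨c', hc', rfl⟩
            have hc'mem := htmem c' hc'
            have hne : w.top.cycleOf γ ≠ c' := fun h => hct (h ▸ hc')
            rw [hterrF c']
            refine not_not_intro ?_
            have hcmoved : w.top.cycleOf γ (w.top γ) ≠ w.top γ := by
              rw [← hcγ]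
              intro h
              exact hγ (hcγ ▸ (w.top.cycleOf γ).injective h)
            rcases hdisj _ hc _ hc'mem hne (w.top γ) with h | h
            · exact absurd h hcmoved
            · exact h
          · rcases List.mem_map.mp hv with ⟨γ₀, hγ₀, rfl⟩
            rw [Finset.mem_toList, Finset.mem_filter] at hγ₀
            intro h
            have h' := hterrG γ₀ h
            rw [Set.mem_singleton_iff] at h'
            rw [h'] at hwγmoved
            exact hwγmoved hγ₀.2.1
    exact Wr.ext' (funext fun γ => (main γ).1) (Equiv.ext fun γ => (main γ).2)
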